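/- Let a, b be real numbers with b > 0 and a + b > 0, and let p ≥ 1. Then (a + b)^p ≥ |a|^p + b^p − p|a|^{p−1}b − p|a|b^{p−1}. -/

import Mathlib

/-- Superadditivity of rpow for `p ≥ 1` on nonnegative reals. -/
lemma real_add_rpow_le_rpow_add {x y p : ℝ} (hx : 0 ≤ x) (hy : 0 ≤ y) (hp : 1 ≤ p) :
    x ^ p + y ^ p ≤ (x + y) ^ p := by
  have h := NNReal.add_rpow_le_rpow_add (⟨x, hx⟩ : NNReal) (⟨y, hy⟩ : NNReal) hp
  have := NNReal.coe_le_coe.mpr h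
  exact_mod_cast this

/-- Tangent line inequality for `t ↦ t^p`, `p ≥ 1`. -/
lemma tangent_rpow {x y p : ℝ} (hx : 0 ≤ x) (hy : 0 < y) (hp : 1 ≤ p) :
    y ^ p + p * y ^ (p - 1) * (x - y) ≤ x ^ p := by
  have hs : (-1 : ℝ) ≤ x / y - 1 := by
    have : 0 ≤ x / y := div_nonneg hx hy.le
    linarith
  have hb := one_add_mul_self_le_rpow_one_add hs hp
  rw [add_sub_cancel] at hb
  have hyp : (0 : ℝ) < y ^ p := Real.rpow_pos_of_pos hy p
  have hmul := mul_le_mul_of_nonneg_right hb hyp.le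
  have hdiv : (x / y) ^ p * y ^ p = x ^ p := by
    rw [Real.div_rpow hx hy.le, div_mul_cancel₀]
    exact hyp.ne'
  have hyy : y ^ (p - 1) * y = y ^ p := by
    rw [Real.rpow_sub_one hy.ne']; field_simp
  rw [hdiv] at hmul
  calc y ^ p + p * y ^ (p - 1) * (x - y)
      = (1 + p * (x / y - 1)) * y ^ p := by
        rw [Real.rpow_sub_one hy.ne']
        field_simp
    _ ≤ x ^ p := hmul

/-- For real numbers `a`, `b` with `b > 0`, `a + b > 0` and a real
exponent `p ≥ 1`, one has `(a + b)^p ≥ |a|^p + b^p − p|a|^{p−1}b − p|a|b^{p−1}`,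
where all powers are real (`rpow`) powers. -/
theorem statement16 (a b p : ℝ) (hb : 0 < b) (hab : 0 < a + b) (hp : 1 ≤ p) :
    (a + b) ^ p ≥ |a| ^ p + b ^ p - p * |a| ^ (p - 1) * b - p * |a| * b ^ (p - 1) := by
  have hp0 : (0:ℝ) < p := lt_of_lt_of_le one_pos hp
  rcases le_or_gt 0 a with ha | ha
  · rw [abs_of_nonneg ha]
    have h1 : a ^ p + b ^ p ≤ (a + b) ^ p := real_add_rpow_le_rpow_add ha hb.le hp
    have h2 : 0 ≤ p * a ^ (p - 1) * b :=
      mul_nonneg (mul_nonneg hp0.le (Real.rpow_nonneg ha _)) hb.le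
    have h3 : 0 ≤ p * a * b ^ (p - 1) :=
      mul_nonneg (mul_nonneg hp0.le ha) (Real.rpow_nonneg hb.le _)
    linarith
  · rw [abs_of_neg ha]
    set c := -a with hc
    have hc0 : 0 < c := by simp [hc]; linarith
    have hcb : c < b := by simp [hc] at *; linarith
    have habe : a + b = b - c := by simp [hc]; ring
    rw [habe]
    -- tangent at y = b, x = b - c:
    have ht := tangent_rpow (x := b - c) (y := b) (by linarith) hb hp
    have hsub : b - c - b = -c := by ring
    rw [hsub] at ht
    -- remaining: c^p ≤ p * c^(p-1) * b
    have hcp : c ^ p ≤ p * c ^ (p - 1) * b := by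
      have h1 : c ^ p = c ^ (p - 1) * c := by
        rw [Real.rpow_sub_one hc0.ne']; field_simp
      have h2 : c ^ (p - 1) * c ≤ c ^ (p - 1) * b :=
        mul_le_mul_of_nonneg_left hcb.le (Real.rpow_nonneg hc0.le _)
      have h3 : c ^ (p - 1) * b ≤ p * (c ^ (p - 1) * b) := by
        nlinarith [Real.rpow_nonneg hc0.le (p-1), mul_nonneg (Real.rpow_nonneg hc0.le (p-1)) hb.le]
      rw [h1]; linarith
    linarith
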